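/- For every bounded real sequence x ∈ ℓ∞, the limit Λ(x) = limₙ→∞ supᵢ≥₁ (1/n) Σⱼ₌₀^{n−1} x_{i+j} exists; moreover, if x is a convergent sequence then Λ(x) = limₙ→∞ xₙ. -/

import Mathlib

noncomputable section
open scoped ENNReal
open Filter Finset

/-- `ℓ∞`: the Banach space of bounded real sequences with the sup norm. -/
abbrev Linf : Type := lp (fun _ : ℕ => ℝ) ∞

/-- For every bounded real sequence `x`, the limit
`Λ(x) = limₙ supᵢ (1/n) ∑_{j<n} x_{i+j}` exists, and if `x` converges to `a`, then `Λ(x) = a`. -/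
theorem exists_lim_sup_average (x : Linf) :
    ∃ l : ℝ,
      Filter.Tendsto (fun n : ℕ => ⨆ i : ℕ, (∑ j ∈ Finset.range n, x (i + j)) / n)
        Filter.atTop (nhds l) ∧
      ∀ a : ℝ, Filter.Tendsto (fun n => x n) Filter.atTop (nhds a) → l = a := by
  set C := ‖x‖ with hCdef
  have hC0 : 0 ≤ C := norm_nonneg x
  have hxb : ∀ k, |x k| ≤ C := fun k => by
    have := lp.norm_apply_le_norm ENNReal.top_ne_zero x k
    rwa [Real.norm_eq_abs] at this
  set S : ℕ → ℕ → ℝ := fun n i => ∑ j ∈ Finset.range n, x (i + j) with hSdef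
  have hSle : ∀ n i, S n i ≤ n * C := by
    intro n i
    calc S n i ≤ ∑ _j ∈ Finset.range n, C :=
          Finset.sum_le_sum fun j _ => (le_abs_self _).trans (hxb _)
      _ = n * C := by simp [mul_comm]
  have hSge : ∀ n i, -(n * C) ≤ S n i := by
    intro n i
    have h1 : ∑ _j ∈ Finset.range n, (-C) ≤ S n i :=
      Finset.sum_le_sum fun j _ => neg_le_of_abs_le (hxb _)
    calc -(n * C) = ∑ _j ∈ Finset.range n, (-C) := by
          simp [mul_comm]
      _ ≤ S n i := h1
  have hbdd : ∀ n, BddAbove (Set.range (S n)) := by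
    intro n
    exact ⟨n * C, by rintro _ ⟨i, rfl⟩; exact hSle n i⟩
  set u : ℕ → ℝ := fun n => ⨆ i, S n i with hudef
  -- the target function
  set f : ℕ → ℝ := fun n => ⨆ i : ℕ, S n i / n with hfdef
  have hbddf : ∀ n, BddAbove (Set.range fun i => S n i / n) := by
    intro n
    refine ⟨C, ?_⟩
    rintro _ ⟨i, rfl⟩
    rcases Nat.eq_zero_or_pos n with hn | hn
    · simp [hn, hSdef, hC0]
    · have hn' : (0 : ℝ) < n := by exact_mod_cast hn
      rw [div_le_iff₀ hn']
      calc S n i ≤ n * C := hSle n i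
        _ = C * n := mul_comm _ _
  have hfu : ∀ n, f n = u n / n := by
    intro n
    rcases Nat.eq_zero_or_pos n with hn | hn
    · simp [hfdef, hudef, hSdef, hn]
    · have hn' : (0 : ℝ) < n := by exact_mod_cast hn
      apply le_antisymm
      · refine ciSup_le fun i => ?_
        exact div_le_div_of_nonneg_right (le_ciSup (hbdd n) i) hn'.le
      · rw [div_le_iff₀ hn']
        refine ciSup_le fun i => ?_
        have : S n i / n ≤ f n := le_ciSup (hbddf n) i
        calc S n i = (S n i / n) * n := by field_simp
          _ ≤ f n * n := by
              exact mul_le_mul_of_nonneg_right this hn'.le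
  have hsub : Subadditive u := by
    intro m n
    refine ciSup_le fun i => ?_
    have hsplit : S (m + n) i = S m i + S n (i + m) := by
      simp only [hSdef]
      rw [← Finset.sum_range_add_sum_Ico (fun j => x (i + j)) (Nat.le_add_right m n),
        Finset.sum_Ico_eq_sum_range]
      simp [add_assoc]
    rw [hsplit]
    exact add_le_add (le_ciSup (hbdd m) i) (le_ciSup (hbdd n) (i + m))
  have hbddbelow : BddBelow (Set.range fun n => u n / n) := by
    refine ⟨-C, ?_⟩
    rintro _ ⟨n, rfl⟩
    rcases Nat.eq_zero_or_pos n with hn | hn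
    · simp [hudef, hSdef, hn]
      linarith
    · have hn' : (0 : ℝ) < n := by exact_mod_cast hn
      rw [le_div_iff₀ hn']
      have : -(n * C) ≤ S n 0 := hSge n 0
      have h2 : S n 0 ≤ u n := le_ciSup (hbdd n) 0
      nlinarith
  have hten : Filter.Tendsto (fun n => u n / n) Filter.atTop (nhds hsub.lim) :=
    hsub.tendsto_lim hbddbelow
  have htenf : Filter.Tendsto f Filter.atTop (nhds hsub.lim) := by
    refine hten.congr fun n => (hfu n).symm
  refine ⟨hsub.lim, htenf, ?_⟩
  intro a hxa
  -- show f tends to a as well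
  have htena : Filter.Tendsto f Filter.atTop (nhds a) := by
    rw [Metric.tendsto_atTop]
    intro ε hε
    obtain ⟨N₁, hN₁⟩ := (Metric.tendsto_atTop.mp hxa) (ε / 2) (by linarith)
    set K : ℝ := C + |a| + ε / 2 with hKdef
    have hK0 : 0 ≤ K := by rw [hKdef]; positivity
    clear_value K
    obtain ⟨M, hM⟩ := exists_nat_gt (2 * N₁ * K / ε)
    refine ⟨max 1 M, fun n hn => ?_⟩
    have hn1 : 1 ≤ n := le_trans (le_max_left _ _) hn
    have hnM : M ≤ n := le_trans (le_max_right _ _) hn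
    have hn' : (0 : ℝ) < n := by exact_mod_cast hn1
    have hsmall : N₁ * K / n < ε / 2 := by
      rw [div_lt_iff₀ hn']
      have h1 : 2 * N₁ * K / ε < (n : ℝ) := lt_of_lt_of_le hM (by exact_mod_cast hnM)
      rw [div_lt_iff₀ hε] at h1
      have hc := mul_comm (n : ℝ) ε
      nlinarith
    -- lower bound: f n ≥ a - ε/2
    have hlow : a - ε / 2 ≤ f n := by
      have h1 : (n : ℝ) * (a - ε / 2) ≤ S n N₁ := by
        calc (n : ℝ) * (a - ε / 2) = ∑ _j ∈ Finset.range n, (a - ε / 2) := by simp [mul_comm]; ring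
          _ ≤ S n N₁ := by
              refine Finset.sum_le_sum fun j _ => ?_
              have := hN₁ (N₁ + j) (Nat.le_add_right _ _)
              rw [Real.dist_eq, abs_lt] at this
              linarith [this.1]
      have h2 : a - ε / 2 ≤ S n N₁ / n := by
        rw [le_div_iff₀ hn']
        linarith [h1]
      exact h2.trans (le_ciSup (hbddf n) N₁)
    -- upper bound: f n ≤ a + ε/2 + N₁ * K / n
    have hup : f n ≤ a + ε / 2 + N₁ * K / n := by
      refine ciSup_le fun i => ?_
      have hterm : ∀ j ∈ Finset.range n,
          x (i + j) ≤ (a + ε / 2) + (if i + j < N₁ then K else 0) := by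
        intro j _
        by_cases hij : i + j < N₁
        · simp only [hij, if_pos]
          have := (le_abs_self _).trans (hxb (i + j))
          have ha : -|a| ≤ a := neg_abs_le a
          rw [hKdef]
          linarith
        · simp only [hij, if_neg, not_false_iff, add_zero]
          have := hN₁ (i + j) (by omega)
          rw [Real.dist_eq, abs_lt] at this
          linarith [this.2]
      have hsum : S n i ≤ (n : ℝ) * (a + ε / 2) + N₁ * K := by
        calc S n i ≤ ∑ j ∈ Finset.range n, ((a + ε / 2) + (if i + j < N₁ then K else 0)) :=
              Finset.sum_le_sum hterm
          _ = (n : ℝ) * (a + ε / 2) + ∑ j ∈ Finset.range n, (if i + j < N₁ then K else 0) := by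
              rw [Finset.sum_add_distrib]
              simp only [Finset.sum_const, Finset.card_range, nsmul_eq_mul]
          _ ≤ (n : ℝ) * (a + ε / 2) + N₁ * K := by
              gcongr
              calc ∑ j ∈ Finset.range n, (if i + j < N₁ then K else 0)
                  = ∑ j ∈ (Finset.range n).filter (fun j => i + j < N₁), K := by
                    rw [Finset.sum_filter]
                _ = ((Finset.range n).filter (fun j => i + j < N₁)).card * K := by
                    rw [Finset.sum_const, nsmul_eq_mul]
                _ ≤ N₁ * K := by
                    have hcard : ((Finset.range n).filter (fun j => i + j < N₁)).card ≤ N₁ := by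
                      have hsub' : (Finset.range n).filter (fun j => i + j < N₁)
                          ⊆ Finset.range N₁ := by
                        intro j hj
                        simp only [Finset.mem_filter, Finset.mem_range] at hj ⊢
                        omega
                      simpa using Finset.card_le_card hsub'
                    exact mul_le_mul_of_nonneg_right (by exact_mod_cast hcard) hK0
      rw [div_le_iff₀ hn']
      calc S n i ≤ (n : ℝ) * (a + ε / 2) + N₁ * K := hsum
        _ = (a + ε / 2 + N₁ * K / n) * n := by field_simp
    rw [Real.dist_eq, abs_lt]
    constructor <;> [linarith [hup, hsmall]; linarith [hlow]]
  exact tendsto_nhds_unique htenf htena
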